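/- arXiv:1109.6310 — 3 statements merged into one kernel-verified Lean document; each statement's English description precedes it below -/
import Mathlib

section
/- For probability distributions P, Q on a finite set 𝒳 and a channel W : 𝒳 → 𝒫(𝒴) with 𝒴 finite, if ‖P − Q‖_∞ ≤ δ with δ ≤ 1/(2|𝒳||𝒴|), then |I(P, W) − I(Q, W)| ≤ δ|𝒳|·log|𝒴| − |𝒴||𝒳|δ·log(|𝒳|δ). -/
open Finset

/-- Shannon entropy of a distribution on a finite alphabet (natural logarithm). -/
noncomputable def shEntropy {α : Type*} [Fintype α] (p : α → ℝ) : ℝ :=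
  -∑ a, p a * Real.log (p a)

/-- Mutual information `I(P,W) = H(PW) − Σₓ P(x) H(W(·|x))`. -/
noncomputable def mutualInfo {X Y : Type*} [Fintype X] [Fintype Y]
    (P : X → ℝ) (W : X → Y → ℝ) : ℝ :=
  shEntropy (fun y => ∑ x, P x * W x y) - ∑ x, P x * shEntropy (W x)

lemma negMulLog_monoOn : MonotoneOn Real.negMulLog (Set.Icc 0 (Real.exp (-1))) := by
  apply monotoneOn_of_deriv_nonneg (convex_Icc _ _)
    Real.continuous_negMulLog.continuousOn
  · intro x hx
    rw [interior_Icc] at hx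
    exact (Real.differentiableAt_negMulLog hx.1.ne').differentiableWithinAt
  · intro x hx
    rw [interior_Icc] at hx
    rw [Real.deriv_negMulLog hx.1.ne']
    have : Real.log x < -1 := by
      have := Real.log_lt_log hx.1 hx.2
      rwa [Real.log_exp] at this
    linarith

lemma negMulLog_subadd {a s : ℝ} (ha : 0 ≤ a) (hs : 0 ≤ s) :
    Real.negMulLog (a + s) ≤ Real.negMulLog a + Real.negMulLog s := by
  rcases ha.eq_or_lt with h | h
  · simp [← h]
  rcases hs.eq_or_lt with h2 | h2
  · simp [← h2]
  have l1 : Real.log a ≤ Real.log (a + s) := Real.log_le_log h (by linarith)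
  have l2 : Real.log s ≤ Real.log (a + s) := Real.log_le_log h2 (by linarith)
  simp only [Real.negMulLog, neg_mul]
  nlinarith [mul_le_mul_of_nonneg_left l1 ha, mul_le_mul_of_nonneg_left l2 hs]

lemma negMulLog_diff_le {a s : ℝ} (ha : 0 ≤ a) (hs : 0 ≤ s) (h1 : a + s ≤ 1) :
    Real.negMulLog a - Real.negMulLog (a + s) ≤ s := by
  rcases ha.eq_or_lt with h | h
  · have : 0 ≤ Real.negMulLog s := Real.negMulLog_nonneg hs (by linarith)
    simp only [← h, Real.negMulLog_zero, zero_add]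
    linarith
  rcases hs.eq_or_lt with h2 | h2
  · simp [← h2]
  have hlog : Real.log ((a + s) / a) ≤ (a + s) / a - 1 :=
    Real.log_le_sub_one_of_pos (by positivity)
  have hlog2 : Real.log (a + s) ≤ 0 := Real.log_nonpos (by linarith) h1
  have e1 : Real.log ((a + s) / a) = Real.log (a + s) - Real.log a :=
    Real.log_div (by linarith) h.ne'
  have e2 : (a + s) / a - 1 = s / a := by field_simp; ring
  have key : a * (Real.log (a + s) - Real.log a) ≤ s := by
    have := mul_le_mul_of_nonneg_left hlog h.le
    rw [e1, e2] at this
    calc a * (Real.log (a + s) - Real.log a) ≤ a * (s / a) := this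
    _ = s := by field_simp
  simp only [Real.negMulLog, neg_mul]
  nlinarith [mul_nonpos_of_nonneg_of_nonpos hs hlog2]

lemma le_negMulLog {t : ℝ} (ht0 : 0 ≤ t) (ht : t ≤ Real.exp (-1)) :
    t ≤ Real.negMulLog t := by
  rcases ht0.eq_or_lt with h | h
  · simp [← h]
  have hlt : Real.log t ≤ -1 := by
    have := Real.log_le_log h ht
    rwa [Real.log_exp] at this
  simp only [Real.negMulLog, neg_mul]
  nlinarith

lemma key_ineq {a b t : ℝ} (ha0 : 0 ≤ a) (hb0 : 0 ≤ b) (ha1 : a ≤ 1) (hb1 : b ≤ 1)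
    (hab : |a - b| ≤ t) (ht : t ≤ Real.exp (-1)) :
    |Real.negMulLog a - Real.negMulLog b| ≤ Real.negMulLog t := by
  have ht0 : 0 ≤ t := le_trans (abs_nonneg _) hab
  have main : ∀ u v : ℝ, 0 ≤ u → u ≤ v → v ≤ 1 → v - u ≤ t →
      Real.negMulLog v - Real.negMulLog u ≤ Real.negMulLog t ∧
      Real.negMulLog u - Real.negMulLog v ≤ Real.negMulLog t := by
    intro u v hu huv hv1 hvt
    have hs0 : 0 ≤ v - u := by linarith
    have hveq : v = u + (v - u) := by ring
    constructor
    · have h1 : Real.negMulLog v ≤ Real.negMulLog u + Real.negMulLog (v - u) := by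
        have := negMulLog_subadd hu hs0
        rwa [show u + (v - u) = v by ring] at this
      have h2 : Real.negMulLog (v - u) ≤ Real.negMulLog t :=
        negMulLog_monoOn ⟨hs0, by linarith⟩ ⟨ht0, ht⟩ hvt
      linarith
    · have h1 : Real.negMulLog u - Real.negMulLog v ≤ v - u := by
        have := negMulLog_diff_le hu hs0 (show u + (v - u) ≤ 1 by linarith)
        rw [show u + (v - u) = v by ring] at this
        linarith
      have h2 : t ≤ Real.negMulLog t := le_negMulLog ht0 ht
      linarith
  rcases le_total a b with hle | hle
  · have := main a b ha0 hle hb1 (by rw [abs_sub_comm] at hab; rwa [abs_of_nonneg (by linarith)] at hab)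
    rw [abs_sub_le_iff]
    exact ⟨this.2, this.1⟩
  · have := main b a hb0 hle ha1 (by rwa [abs_of_nonneg (by linarith)] at hab)
    rw [abs_sub_le_iff]
    exact ⟨this.1, this.2⟩

lemma shEntropy_eq {α : Type*} [Fintype α] (p : α → ℝ) :
    shEntropy p = ∑ a, Real.negMulLog (p a) := by
  simp [shEntropy, Real.negMulLog, neg_mul, Finset.sum_neg_distrib]

lemma shEntropy_nonneg {α : Type*} [Fintype α] (p : α → ℝ)
    (h0 : ∀ a, 0 ≤ p a) (h1 : ∀ a, p a ≤ 1) : 0 ≤ shEntropy p := by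
  rw [shEntropy_eq]
  exact Finset.sum_nonneg fun a _ => Real.negMulLog_nonneg (h0 a) (h1 a)

lemma shEntropy_le_log_card {α : Type*} [Fintype α] [Nonempty α] (p : α → ℝ)
    (h0 : ∀ a, 0 ≤ p a) (h1 : ∑ a, p a = 1) :
    shEntropy p ≤ Real.log (Fintype.card α) := by
  set n : ℝ := (Fintype.card α : ℝ) with hn
  have hnpos : 0 < n := by
    simp only [hn, Nat.cast_pos]
    exact Fintype.card_pos
  have hterm : ∀ a, Real.negMulLog (p a) ≤ p a * Real.log n + (1 / n - p a) := by
    intro a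
    rcases (h0 a).eq_or_lt with h | h
    · simp only [← h, Real.negMulLog_zero, zero_mul, zero_add, sub_zero]
      positivity
    · have hpos : 0 < 1 / (p a * n) := by positivity
      have hlog : Real.log (1 / (p a * n)) ≤ 1 / (p a * n) - 1 :=
        Real.log_le_sub_one_of_pos hpos
      have e1 : Real.log (1 / (p a * n)) = -(Real.log (p a) + Real.log n) := by
        rw [one_div, Real.log_inv, Real.log_mul h.ne' hnpos.ne']
      rw [e1] at hlog
      have := mul_le_mul_of_nonneg_left hlog h.le
      have e2 : p a * (1 / (p a * n) - 1) = 1 / n - p a := by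
        field_simp
      rw [e2] at this
      simp only [Real.negMulLog, neg_mul]
      nlinarith
  calc shEntropy p = ∑ a, Real.negMulLog (p a) := shEntropy_eq p
  _ ≤ ∑ a, (p a * Real.log n + (1 / n - p a)) :=
      Finset.sum_le_sum fun a _ => hterm a
  _ = Real.log n := by
      rw [Finset.sum_add_distrib, ← Finset.sum_mul, h1, Finset.sum_sub_distrib,
        Finset.sum_const, h1, Finset.card_univ, nsmul_eq_mul, ← hn]
      field_simp
      ring


/-- Continuity of mutual information in the input distribution: if `‖P − Q‖_∞ ≤ δ` with
`δ ≤ 1/(2|X||Y|)`, then `|I(P,W) − I(Q,W)| ≤ δ|X| log|Y| − |Y||X|δ log(|X|δ)`. -/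
theorem mutualInfo_continuity {X Y : Type*} [Fintype X] [Fintype Y]
    (P Q : X → ℝ) (W : X → Y → ℝ)
    (hP0 : ∀ x, 0 ≤ P x) (hP1 : ∑ x, P x = 1)
    (hQ0 : ∀ x, 0 ≤ Q x) (hQ1 : ∑ x, Q x = 1)
    (hW0 : ∀ x y, 0 ≤ W x y) (hW1 : ∀ x, ∑ y, W x y = 1)
    (δ : ℝ) (hδ : ∀ x, |P x - Q x| ≤ δ)
    (hδ2 : δ ≤ 1 / (2 * (Fintype.card X) * (Fintype.card Y))) :
    |mutualInfo P W - mutualInfo Q W|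
      ≤ δ * (Fintype.card X) * Real.log (Fintype.card Y)
        - (Fintype.card Y) * (Fintype.card X) * δ * Real.log ((Fintype.card X) * δ) := by
  classical
  have hXne : Nonempty X := by
    by_contra h
    rw [not_nonempty_iff] at h
    rw [Finset.univ_eq_empty, Finset.sum_empty] at hP1
    exact one_ne_zero hP1.symm
  obtain ⟨x0⟩ := hXne
  have hXne : Nonempty X := ⟨x0⟩
  have hYne : Nonempty Y := by
    by_contra h
    rw [not_nonempty_iff] at h
    have h1 := hW1 x0
    rw [Finset.univ_eq_empty, Finset.sum_empty] at h1
    exact one_ne_zero h1.symm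
  set m : ℕ := Fintype.card X with hm
  set n : ℕ := Fintype.card Y with hn
  have hm1 : 1 ≤ m := Fintype.card_pos
  have hn1 : 1 ≤ n := Fintype.card_pos
  have hmR : (1 : ℝ) ≤ (m : ℝ) := by exact_mod_cast hm1
  have hnR : (1 : ℝ) ≤ (n : ℝ) := by exact_mod_cast hn1
  have hδ0 : (0 : ℝ) ≤ δ := le_trans (abs_nonneg _) (hδ x0)
  set t : ℝ := (m : ℝ) * δ with htdef
  have ht0 : 0 ≤ t := by positivity
  have hW1' : ∀ x y, W x y ≤ 1 := by
    intro x y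
    calc W x y ≤ ∑ y', W x y' :=
      Finset.single_le_sum (fun y' _ => hW0 x y') (Finset.mem_univ y)
    _ = 1 := hW1 x
  set p : Y → ℝ := fun y => ∑ x, P x * W x y with hp
  set q : Y → ℝ := fun y => ∑ x, Q x * W x y with hq
  have hp0 : ∀ y, 0 ≤ p y := fun y =>
    Finset.sum_nonneg fun x _ => mul_nonneg (hP0 x) (hW0 x y)
  have hq0 : ∀ y, 0 ≤ q y := fun y =>
    Finset.sum_nonneg fun x _ => mul_nonneg (hQ0 x) (hW0 x y)
  have hp1 : ∀ y, p y ≤ 1 := by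
    intro y
    calc p y ≤ ∑ x, P x := Finset.sum_le_sum fun x _ => by
          calc P x * W x y ≤ P x * 1 :=
            mul_le_mul_of_nonneg_left (hW1' x y) (hP0 x)
          _ = P x := mul_one _
    _ = 1 := hP1
  have hq1 : ∀ y, q y ≤ 1 := by
    intro y
    calc q y ≤ ∑ x, Q x := Finset.sum_le_sum fun x _ => by
          calc Q x * W x y ≤ Q x * 1 :=
            mul_le_mul_of_nonneg_left (hW1' x y) (hQ0 x)
          _ = Q x := mul_one _
    _ = 1 := hQ1
  have hpq : ∀ y, |p y - q y| ≤ t := by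
    intro y
    have e : p y - q y = ∑ x, (P x - Q x) * W x y := by
      rw [hp, hq, ← Finset.sum_sub_distrib]
      exact Finset.sum_congr rfl fun x _ => by ring
    rw [e]
    calc |∑ x, (P x - Q x) * W x y| ≤ ∑ x, |(P x - Q x) * W x y| :=
      Finset.abs_sum_le_sum_abs _ _
    _ ≤ ∑ _x : X, δ := Finset.sum_le_sum fun x _ => by
        rw [abs_mul, abs_of_nonneg (hW0 x y)]
        calc |P x - Q x| * W x y ≤ δ * 1 :=
          mul_le_mul (hδ x) (hW1' x y) (hW0 x y) hδ0
        _ = δ := mul_one _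
    _ = t := by rw [Finset.sum_const, Finset.card_univ, ← hm, nsmul_eq_mul, htdef]
  have hHW0 : ∀ x, 0 ≤ shEntropy (W x) := fun x =>
    shEntropy_nonneg (W x) (hW0 x) (hW1' x)
  have hHWle : ∀ x, shEntropy (W x) ≤ Real.log n := fun x =>
    shEntropy_le_log_card (W x) (hW0 x) (hW1 x)
  have hlogn0 : 0 ≤ Real.log n := Real.log_nonneg hnR
  -- Part A: conditional entropy difference
  have hA : |∑ x, (P x - Q x) * shEntropy (W x)| ≤ δ * m * Real.log n := by
    calc |∑ x, (P x - Q x) * shEntropy (W x)|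
        ≤ ∑ x, |(P x - Q x) * shEntropy (W x)| := Finset.abs_sum_le_sum_abs _ _
    _ ≤ ∑ _x : X, δ * Real.log n := Finset.sum_le_sum fun x _ => by
        rw [abs_mul, abs_of_nonneg (hHW0 x)]
        exact mul_le_mul (hδ x) (hHWle x) (hHW0 x) hδ0
    _ = δ * m * Real.log n := by
        rw [Finset.sum_const, Finset.card_univ, ← hm, nsmul_eq_mul]; ring
  -- Part B: output entropy difference
  have hB : |shEntropy p - shEntropy q| ≤ n * Real.negMulLog t := by
    by_cases hn2 : 2 ≤ n
    · have htle : t ≤ Real.exp (-1) := by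
        have h1 : t ≤ (m : ℝ) * (1 / (2 * m * n)) :=
          mul_le_mul_of_nonneg_left hδ2 (by positivity)
        have h2 : (m : ℝ) * (1 / (2 * m * n)) = 1 / (2 * n) := by
          field_simp
        have h3 : (4 : ℝ) ≤ 2 * n := by
          have : (2 : ℝ) ≤ (n : ℝ) := by exact_mod_cast hn2
          linarith
        have h4 : (1 : ℝ) / (2 * n) ≤ 1 / 4 :=
          one_div_le_one_div_of_le (by norm_num) h3
        have h5 : (1 : ℝ) / 4 ≤ Real.exp (-1) := by
          rw [Real.exp_neg]
          have he : Real.exp 1 ≤ 4 := by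
            have := Real.exp_one_lt_d9
            linarith
          have := one_div_le_one_div_of_le (Real.exp_pos 1) he
          rw [one_div (Real.exp 1)] at this
          linarith
        linarith [h1, h2 ▸ h1]
      calc |shEntropy p - shEntropy q|
          = |∑ y, (Real.negMulLog (p y) - Real.negMulLog (q y))| := by
            rw [shEntropy_eq, shEntropy_eq, Finset.sum_sub_distrib]
      _ ≤ ∑ y, |Real.negMulLog (p y) - Real.negMulLog (q y)| :=
            Finset.abs_sum_le_sum_abs _ _
      _ ≤ ∑ _y : Y, Real.negMulLog t := Finset.sum_le_sum fun y _ =>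
            key_ineq (hp0 y) (hq0 y) (hp1 y) (hq1 y) (hpq y) htle
      _ = n * Real.negMulLog t := by
            rw [Finset.sum_const, Finset.card_univ, ← hn, nsmul_eq_mul]
    · have hn1' : n = 1 := by omega
      haveI hsY : Subsingleton Y := Fintype.card_le_one_iff_subsingleton.mp (by omega)
      have hWone : ∀ x y, W x y = 1 := by
        intro x y
        have h := hW1 x
        have huniv : (Finset.univ : Finset Y) = {y} :=
          Finset.eq_singleton_iff_unique_mem.mpr
            ⟨Finset.mem_univ y, fun z _ => Subsingleton.elim z y⟩
        rw [huniv, Finset.sum_singleton] at h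
        exact h
      have hpy : ∀ y, p y = 1 := by
        intro y; rw [hp]; simp only [hWone, mul_one]; exact hP1
      have hqy : ∀ y, q y = 1 := by
        intro y; rw [hq]; simp only [hWone, mul_one]; exact hQ1
      have hpe : shEntropy p = 0 := by
        rw [shEntropy_eq]
        simp [hpy]
      have hqe : shEntropy q = 0 := by
        rw [shEntropy_eq]
        simp [hqy]
      rw [hpe, hqe, sub_zero, abs_zero]
      have ht1 : t ≤ 1 := by
        have h1 : t ≤ (m : ℝ) * (1 / (2 * m * n)) :=
          mul_le_mul_of_nonneg_left hδ2 (by positivity)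
        have h2 : (m : ℝ) * (1 / (2 * m * n)) = 1 / (2 * n) := by field_simp
        have : (1 : ℝ) / (2 * n) ≤ 1 := by
          rw [div_le_one (by positivity)]
          linarith
        linarith [h2 ▸ h1]
      exact mul_nonneg (by positivity) (Real.negMulLog_nonneg ht0 ht1)
  -- combine
  have hdecomp : mutualInfo P W - mutualInfo Q W
      = (shEntropy p - shEntropy q) - ∑ x, (P x - Q x) * shEntropy (W x) := by
    unfold mutualInfo
    rw [← hp, ← hq]
    rw [show ∑ x, (P x - Q x) * shEntropy (W x)
        = ∑ x, P x * shEntropy (W x) - ∑ x, Q x * shEntropy (W x) by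
      rw [← Finset.sum_sub_distrib]
      exact Finset.sum_congr rfl fun x _ => by ring]
    ring
  rw [hdecomp]
  calc |(shEntropy p - shEntropy q) - ∑ x, (P x - Q x) * shEntropy (W x)|
      ≤ |shEntropy p - shEntropy q| + |∑ x, (P x - Q x) * shEntropy (W x)| :=
        abs_sub _ _
  _ ≤ n * Real.negMulLog t + δ * m * Real.log n := add_le_add hB hA
  _ = δ * m * Real.log n - n * m * δ * Real.log (m * δ) := by
        rw [htdef]
        simp only [Real.negMulLog, neg_mul]
        ring
end

section
/- Fix a finite source alphabet 𝒮, a finite reproduction alphabet 𝒮̂, a distortion measure d : 𝒮×𝒮̂ → ℝ₊, a type P ∈ 𝒫ₙ(𝒮), and a reconstruction sequence ŝ ∈ 𝒮̂ⁿ. Then the restricted D-ball B(ŝ, P, D) = {s ∈ Tₚⁿ : d(s, ŝ) ≤ D} satisfies |B(ŝ, P, D)| ≤ (n+1)^{|𝒮||𝒮̂|} · exp{ n [H(P) − R(P, D)] }. -/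
open Finset

/-- Mutual information of a source distribution `P` and a test channel `Λ`. -/
noncomputable def miSrc {S T : Type*} [Fintype S] [Fintype T]
    (P : S → ℝ) (Λ : S → T → ℝ) : ℝ :=
  ∑ s, ∑ t, P s * Λ s t * Real.log (Λ s t / (∑ s', P s' * Λ s' t))

/-- Rate-distortion function: infimum of `I(P,Λ)` over test channels with expected
distortion at most `D`. -/
noncomputable def RDF {S T : Type*} [Fintype S] [Fintype T]
    (P : S → ℝ) (d : S → T → ℝ) (D : ℝ) : ℝ :=
  sInf {r : ℝ | ∃ Λ : S → T → ℝ, (∀ s t, 0 ≤ Λ s t) ∧ (∀ s, ∑ t, Λ s t = 1) ∧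
    (∑ s, ∑ t, P s * Λ s t * d s t) ≤ D ∧ r = miSrc P Λ}

lemma log_ge_one_sub_inv {x : ℝ} (hx : 0 < x) : 1 - x⁻¹ ≤ Real.log x := by
  have h := Real.log_le_sub_one_of_pos (inv_pos.mpr hx)
  rw [Real.log_inv] at h
  linarith

lemma miSrc_nonneg {S T : Type*} [Fintype S] [Fintype T]
    (P : S → ℝ) (Λ : S → T → ℝ) (hP0 : ∀ s, 0 ≤ P s) (hP1 : ∑ s, P s = 1)
    (hΛ0 : ∀ s t, 0 ≤ Λ s t) (hΛ1 : ∀ s, ∑ t, Λ s t = 1) :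
    0 ≤ miSrc P Λ := by
  set q : T → ℝ := fun t => ∑ s', P s' * Λ s' t with hq
  have hq0 : ∀ t, 0 ≤ q t := fun t =>
    Finset.sum_nonneg fun s _ => mul_nonneg (hP0 s) (hΛ0 s t)
  have key : ∀ s t, P s * Λ s t - P s * q t ≤ P s * Λ s t * Real.log (Λ s t / q t) := by
    intro s t
    rcases eq_or_lt_of_le (mul_nonneg (hP0 s) (hΛ0 s t)) with h | h
    · rw [← h]
      have : 0 ≤ P s * q t := mul_nonneg (hP0 s) (hq0 t)
      linarith
    · have hPs : 0 < P s := by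
        rcases (hP0 s).lt_or_eq with h' | h'
        · exact h'
        · exfalso; rw [← h'] at h; simp at h
      have hΛst : 0 < Λ s t := by
        rcases (hΛ0 s t).lt_or_eq with h' | h'
        · exact h'
        · exfalso; rw [← h'] at h; simp at h
      have hqt : 0 < q t := by
        have : P s * Λ s t ≤ q t := by
          apply Finset.single_le_sum (f := fun s' => P s' * Λ s' t)
            (fun s' _ => mul_nonneg (hP0 s') (hΛ0 s' t)) (Finset.mem_univ s)
        linarith
      have hlog := log_ge_one_sub_inv (div_pos hΛst hqt)
      have hinv : (Λ s t / q t)⁻¹ = q t / Λ s t := by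
        rw [inv_div]
      rw [hinv] at hlog
      have h2 : P s * Λ s t * (1 - q t / Λ s t) ≤ P s * Λ s t * Real.log (Λ s t / q t) :=
        mul_le_mul_of_nonneg_left hlog (le_of_lt h)
      have h3 : P s * Λ s t * (1 - q t / Λ s t) = P s * Λ s t - P s * q t := by
        field_simp
      linarith
  have hsum : ∑ s, ∑ t, (P s * Λ s t - P s * q t) = 0 := by
    have h1 : ∑ s, ∑ t, P s * Λ s t = 1 := by
      calc ∑ s, ∑ t, P s * Λ s t = ∑ s, P s * ∑ t, Λ s t := by
            simp [Finset.mul_sum]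
        _ = ∑ s, P s := by simp [hΛ1]
        _ = 1 := hP1
    have h2 : ∑ s, ∑ t, P s * q t = 1 := by
      have hqsum : ∑ t, q t = 1 := by
        rw [hq]
        rw [Finset.sum_comm]
        calc ∑ s', ∑ t, P s' * Λ s' t = ∑ s', P s' * ∑ t, Λ s' t := by
              simp [Finset.mul_sum]
          _ = 1 := by simp [hΛ1, hP1]
      calc ∑ s, ∑ t, P s * q t = ∑ s, P s * ∑ t, q t := by simp [Finset.mul_sum]
        _ = 1 := by simp [hqsum, hP1]
    simp [Finset.sum_sub_distrib, h1, h2]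
  have := Finset.sum_le_sum (fun s (_ : s ∈ Finset.univ) =>
    Finset.sum_le_sum (fun t (_ : t ∈ Finset.univ) => key s t))
  have hmi : miSrc P Λ = ∑ s, ∑ t, P s * Λ s t * Real.log (Λ s t / q t) := rfl
  rw [hmi]
  linarith [hsum ▸ this]

lemma fiber_card_le {S T : Type*} [Fintype S] [Fintype T] [DecidableEq S] [DecidableEq T]
    (n : ℕ) (hn : 0 < n) (shat : Fin n → T) (N : S × T → ℕ)
    (v0 : Fin n → S)
    (hv0 : ∀ p : S × T, ((univ.filter fun i => v0 i = p.1 ∧ shat i = p.2).card) = N p) :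
    ((univ.filter fun v : Fin n → S =>
        ∀ p : S × T, ((univ.filter fun i => v i = p.1 ∧ shat i = p.2).card) = N p).card : ℝ)
      ≤ Real.exp (∑ p : S × T, (N p : ℝ) * Real.log ((∑ s, N (s, p.2) : ℕ) / (N p : ℝ))) := by
  classical
  set m : T → ℕ := fun t => ∑ s, N (s, t) with hm
  -- m t = number of i with shat i = t
  have hmcard : ∀ t, (univ.filter fun i => shat i = t).card = m t := by
    intro t
    rw [hm]
    have := Finset.card_eq_sum_card_fiberwise
      (f := v0) (s := univ.filter fun i => shat i = t) (t := univ)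
      (fun x _ => Finset.mem_univ _)
    rw [this]
    apply Finset.sum_congr rfl
    intro s _
    rw [← hv0 (s, t)]
    congr 1
    ext i
    simp [and_comm]
  have hmpos : ∀ i : Fin n, 0 < m (shat i) := by
    intro i
    rw [← hmcard]
    exact Finset.card_pos.mpr ⟨i, by simp⟩
  set r : S → T → ℝ := fun s t => (N (s, t) : ℝ) / (m t : ℝ) with hr
  have hr0 : ∀ s t, 0 ≤ r s t := fun s t => by positivity
  have hrsum : ∀ t, 0 < m t → ∑ s, r s t = 1 := by
    intro t ht
    rw [hr]
    simp only
    rw [← Finset.sum_div]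
    rw [hm]
    rw [div_eq_one_iff_eq (by exact_mod_cast ht.ne')]
    push_cast
    rfl
  set w : (Fin n → S) → ℝ := fun v => ∏ i, r (v i) (shat i) with hw
  have hw0 : ∀ v, 0 ≤ w v := fun v => Finset.prod_nonneg fun i _ => hr0 _ _
  have hwtotal : ∑ v : Fin n → S, w v = 1 := by
    rw [hw]
    have := Finset.prod_univ_sum (κ := fun _ : Fin n => S)
      (t := fun _ : Fin n => (univ : Finset S)) (f := fun i s => r s (shat i))
    rw [Fintype.piFinset_univ] at this
    rw [← this]
    apply Finset.prod_eq_one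
    intro i _
    exact hrsum (shat i) (hmpos i)
  set Fib : Finset (Fin n → S) := univ.filter fun v : Fin n → S =>
      ∀ p : S × T, ((univ.filter fun i => v i = p.1 ∧ shat i = p.2).card) = N p with hFib
  set c : ℝ := ∏ p : S × T, r p.1 p.2 ^ N p with hc
  have hwv : ∀ v ∈ Fib, w v = c := by
    intro v hv
    rw [hFib, Finset.mem_filter] at hv
    have hvN := hv.2
    rw [hw, hc]
    simp only
    rw [← Finset.prod_fiberwise_of_maps_to (g := fun i => (v i, shat i))
      (t := univ) (fun i _ => Finset.mem_univ _) (f := fun i => r (v i) (shat i))]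
    apply Finset.prod_congr rfl
    intro p _
    have hfilt : (univ.filter fun i => (v i, shat i) = p)
        = (univ.filter fun i => v i = p.1 ∧ shat i = p.2) := by
      ext i; simp [Prod.ext_iff]
    calc ∏ i ∈ univ.filter fun i => (v i, shat i) = p, r (v i) (shat i)
        = ∏ _i ∈ univ.filter fun i => (v i, shat i) = p, r p.1 p.2 := by
          apply Finset.prod_congr rfl
          intro i hi
          rw [Finset.mem_filter] at hi
          rw [← hi.2]
      _ = r p.1 p.2 ^ N p := by
          rw [Finset.prod_const, hfilt, hvN p]
  have hNm : ∀ p : S × T, N p ≤ m p.2 := by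
    intro p
    rw [hm]
    exact Finset.single_le_sum (f := fun s => N (s, p.2)) (fun s _ => Nat.zero_le _)
      (Finset.mem_univ p.1)
  have hcpos : 0 < c := by
    rw [hc]
    apply Finset.prod_pos
    intro p _
    rcases Nat.eq_zero_or_pos (N p) with h | h
    · rw [h, pow_zero]; exact one_pos
    · apply pow_pos
      rw [hr]
      have : 0 < m p.2 := lt_of_lt_of_le h (hNm p)
      have h1 : (0:ℝ) < N p := by exact_mod_cast h
      have h2 : (0:ℝ) < m p.2 := by exact_mod_cast this
      positivity
  have hkey : (Fib.card : ℝ) * c ≤ 1 := by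
    have h1 : (Fib.card : ℝ) * c = ∑ v ∈ Fib, w v := by
      rw [Finset.sum_congr rfl hwv, Finset.sum_const, nsmul_eq_mul]
    rw [h1, ← hwtotal]
    exact Finset.sum_le_sum_of_subset_of_nonneg (Finset.filter_subset _ _)
      (fun v _ _ => hw0 v)
  set L : ℝ := ∑ p : S × T, (N p : ℝ) * Real.log ((m p.2 : ℝ) / (N p : ℝ)) with hL
  have hexpc : Real.exp L * c = 1 := by
    rw [hL, hc, Real.exp_sum, ← Finset.prod_mul_distrib]
    apply Finset.prod_eq_one
    intro p _
    rcases Nat.eq_zero_or_pos (N p) with h | h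
    · simp [h]
    · have hm2 : 0 < m p.2 := lt_of_lt_of_le h (hNm p)
      have h1 : (0:ℝ) < N p := by exact_mod_cast h
      have h2 : (0:ℝ) < m p.2 := by exact_mod_cast hm2
      have hx : (0:ℝ) < (m p.2 : ℝ) / (N p : ℝ) := by positivity
      have hexp : Real.exp ((N p : ℝ) * Real.log ((m p.2 : ℝ) / (N p : ℝ)))
          = ((m p.2 : ℝ) / (N p : ℝ)) ^ N p := by
        rw [Real.exp_nat_mul, Real.exp_log hx]
      rw [hexp, hr]
      simp only
      have hone : ((m p.2 : ℝ) / (N p : ℝ)) * ((N (p.1, p.2) : ℝ) / (m p.2 : ℝ)) = 1 := by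
        rw [Prod.mk.eta]
        field_simp
      rw [← mul_pow, hone, one_pow]
  have hfinal : (Fib.card : ℝ) ≤ Real.exp L := by
    have : Real.exp L = 1 / c := by
      field_simp at hexpc ⊢
      linarith [hexpc]
    rw [this]
    rw [le_div_iff₀ hcpos]
    exact hkey
  convert hfinal using 2

lemma exponent_bound {S T : Type*} [Fintype S] [Fintype T]
    (n : ℕ) (hn : 0 < n) (P : S → ℝ) (hP1 : ∑ s, P s = 1) (hP0 : ∀ s, 0 ≤ P s)
    (d : S → T → ℝ) (D : ℝ) (t0 : T) (N : S × T → ℕ)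
    (hmarg : ∀ s, ((∑ t, N (s, t) : ℕ) : ℝ) = n * P s)
    (hdist : (1 / n) * ∑ p : S × T, (N p : ℝ) * d p.1 p.2 ≤ D) :
    ∑ p : S × T, (N p : ℝ) * Real.log ((∑ s, N (s, p.2) : ℕ) / (N p : ℝ))
      ≤ n * (shEntropy P - RDF P d D) := by
  classical
  have hnR : (0:ℝ) < n := by exact_mod_cast hn
  set Λ : S → T → ℝ := fun s t =>
    if P s = 0 then (if t = t0 then 1 else 0) else (N (s, t) : ℝ) / (n * P s) with hΛ
  have hNzero : ∀ s, P s = 0 → ∀ t, N (s, t) = 0 := by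
    intro s hs t
    have h0 : ((∑ t', N (s, t') : ℕ) : ℝ) = 0 := by rw [hmarg s, hs, mul_zero]
    have h1 : (∑ t', N (s, t')) = 0 := by exact_mod_cast h0
    exact (Finset.sum_eq_zero_iff.mp h1) t (Finset.mem_univ t)
  have hΛ0 : ∀ s t, 0 ≤ Λ s t := by
    intro s t
    rw [hΛ]
    simp only
    split_ifs with h1 h2
    · exact zero_le_one
    · exact le_refl 0
    · have : 0 < P s := lt_of_le_of_ne (hP0 s) (Ne.symm h1)
      positivity
  have hΛ1 : ∀ s, ∑ t, Λ s t = 1 := by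
    intro s
    rw [hΛ]
    simp only
    by_cases h : P s = 0
    · simp [h]
    · simp only [if_neg h]
      rw [← Finset.sum_div]
      rw [div_eq_one_iff_eq (by
        have : 0 < P s := lt_of_le_of_ne (hP0 s) (Ne.symm h)
        positivity)]
      exact_mod_cast hmarg s
  have hPΛ : ∀ s t, P s * Λ s t = (N (s, t) : ℝ) / n := by
    intro s t
    rw [hΛ]
    simp only
    by_cases h : P s = 0
    · rw [if_pos h, h, hNzero s h t]
      simp
    · rw [if_neg h]
      have hPs : 0 < P s := lt_of_le_of_ne (hP0 s) (Ne.symm h)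
      field_simp
  have hq : ∀ t, ∑ s', P s' * Λ s' t = ((∑ s, N (s, t) : ℕ) : ℝ) / n := by
    intro t
    rw [Finset.sum_congr rfl (fun s _ => hPΛ s t), ← Finset.sum_div]
    push_cast
    rfl
  have hdist' : (∑ s, ∑ t, P s * Λ s t * d s t) ≤ D := by
    have : ∑ s, ∑ t, P s * Λ s t * d s t
        = (1 / n) * ∑ p : S × T, (N p : ℝ) * d p.1 p.2 := by
      rw [Fintype.sum_prod_type, Finset.mul_sum]
      apply Finset.sum_congr rfl
      intro s _
      rw [Finset.mul_sum]
      apply Finset.sum_congr rfl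
      intro t _
      rw [hPΛ]
      ring
    rw [this]
    exact hdist
  have hRDF : RDF P d D ≤ miSrc P Λ := by
    apply csInf_le
    · refine ⟨0, ?_⟩
      rintro r ⟨Λ', h0', h1', _, hr⟩
      rw [hr]
      exact miSrc_nonneg P Λ' hP0 hP1 h0' h1'
    · exact ⟨Λ, hΛ0, hΛ1, hdist', rfl⟩
  -- key per-term identity
  have hterm : ∀ s t, (N (s, t) : ℝ) * Real.log (((∑ s', N (s', t) : ℕ) : ℝ) / (N (s, t) : ℝ))
      = -(N (s, t) : ℝ) * Real.log (P s)
        - n * (P s * Λ s t * Real.log (Λ s t / (∑ s', P s' * Λ s' t))) := by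
    intro s t
    rcases Nat.eq_zero_or_pos (N (s, t)) with h | h
    · have hz : P s * Λ s t = 0 := by rw [hPΛ, h]; simp
      rw [h, hz]
      simp
    · have hNpos : (0:ℝ) < N (s, t) := by exact_mod_cast h
      have hPs : 0 < P s := by
        by_contra hc
        push_neg at hc
        have : P s = 0 := le_antisymm hc (hP0 s)
        rw [hNzero s this t] at h
        exact absurd h (lt_irrefl 0)
      have hmt : 0 < (∑ s', N (s', t)) :=
        lt_of_lt_of_le h (Finset.single_le_sum (f := fun s' => N (s', t))
          (fun s' _ => Nat.zero_le _) (Finset.mem_univ s))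
      have hmtR : (0:ℝ) < ((∑ s', N (s', t) : ℕ) : ℝ) := by exact_mod_cast hmt
      have hΛst : Λ s t = (N (s, t) : ℝ) / (n * P s) := by
        rw [hΛ]; simp only [if_neg hPs.ne']
      have hΛpos : 0 < Λ s t := by rw [hΛst]; positivity
      rw [hq t]
      have hrat : Λ s t / (((∑ s', N (s', t) : ℕ) : ℝ) / n)
          = (N (s, t) : ℝ) / (P s * ((∑ s', N (s', t) : ℕ) : ℝ)) := by
        rw [hΛst]
        field_simp [hnR.ne']
      rw [hrat, hPΛ]
      rw [Real.log_div hNpos.ne' (by positivity), Real.log_mul hPs.ne' hmtR.ne']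
      rw [Real.log_div hmtR.ne' hNpos.ne']
      field_simp
      ring
  have hsum : ∑ p : S × T, (N p : ℝ) * Real.log ((∑ s, N (s, p.2) : ℕ) / (N p : ℝ))
      = n * shEntropy P - n * miSrc P Λ := by
    rw [Fintype.sum_prod_type]
    have h1 : ∑ s, ∑ t, (N (s, t) : ℝ) * Real.log (((∑ s', N (s', t) : ℕ) : ℝ) / (N (s, t) : ℝ))
        = ∑ s, ∑ t, (-(N (s, t) : ℝ) * Real.log (P s)
          - n * (P s * Λ s t * Real.log (Λ s t / (∑ s', P s' * Λ s' t)))) := by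
      exact Finset.sum_congr rfl fun s _ => Finset.sum_congr rfl fun t _ => hterm s t
    rw [h1]
    have h2 : ∑ s, ∑ t, (-(N (s, t) : ℝ) * Real.log (P s)
          - n * (P s * Λ s t * Real.log (Λ s t / (∑ s', P s' * Λ s' t))))
        = (∑ s, ∑ t, (-(N (s, t) : ℝ) * Real.log (P s)))
          - (∑ s, ∑ t, (n : ℝ) * (P s * Λ s t * Real.log (Λ s t / (∑ s', P s' * Λ s' t)))) := by
      rw [← Finset.sum_sub_distrib]
      exact Finset.sum_congr rfl fun s _ => by rw [← Finset.sum_sub_distrib]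
    rw [h2]
    have hH : ∑ s, ∑ t, (-(N (s, t) : ℝ) * Real.log (P s)) = n * shEntropy P := by
      have hrhs : (n : ℝ) * shEntropy P = ∑ s, -((n : ℝ) * P s * Real.log (P s)) := by
        simp [shEntropy, Finset.mul_sum, mul_neg, mul_assoc]
      rw [hrhs]
      apply Finset.sum_congr rfl
      intro s _
      have hcast : ∑ t, (N (s, t) : ℝ) = (n : ℝ) * P s := by exact_mod_cast hmarg s
      simp only [neg_mul]
      rw [Finset.sum_neg_distrib, ← Finset.sum_mul, hcast]
    have hmi' : ∑ s, ∑ t, (n : ℝ) * (P s * Λ s t * Real.log (Λ s t / (∑ s', P s' * Λ s' t)))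
        = n * miSrc P Λ := by
      rw [miSrc, Finset.mul_sum]
      exact Finset.sum_congr rfl fun s _ => by rw [Finset.mul_sum]
    rw [hH, hmi']
  rw [hsum]
  have : n * miSrc P Λ ≥ n * RDF P d D := by
    apply mul_le_mul_of_nonneg_left hRDF (le_of_lt hnR)
  linarith

/-- Restricted `D`-ball size: the number of source sequences of type `P` that are
`D`-covered by a fixed reconstruction sequence `ŝ` is at most
`(n+1)^{|S||Ŝ|} exp(n[H(P) − R(P,D)])`. -/
theorem restricted_D_ball_size {S T : Type*} [Fintype S] [Fintype T] [DecidableEq S]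
    (n : ℕ) (hn : 0 < n) (P : S → ℝ) (hP1 : ∑ s, P s = 1)
    (htype : ∀ s, ∃ k : ℕ, (n : ℝ) * P s = k)
    (d : S → T → ℝ) (hd0 : ∀ s t, 0 ≤ d s t) (D : ℝ) (shat : Fin n → T) :
    (Set.ncard {v : Fin n → S |
        (∀ a, ((Finset.univ.filter (fun i => v i = a)).card : ℝ) = n * P a) ∧
        (1 / n) * ∑ i, d (v i) (shat i) ≤ D} : ℝ)
      ≤ (n + 1) ^ (Fintype.card S * Fintype.card T) *
        Real.exp (n * (shEntropy P - RDF P d D)) := by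
  classical
  have hnR : (0:ℝ) < n := by exact_mod_cast hn
  have hP0 : ∀ s, 0 ≤ P s := by
    intro s
    obtain ⟨k, hk⟩ := htype s
    have : P s = (k : ℝ) / n := by field_simp [hnR.ne'] at hk ⊢; linarith [hk]
    rw [this]; positivity
  set Bf : Finset (Fin n → S) := univ.filter (fun v =>
      (∀ a, ((Finset.univ.filter (fun i => v i = a)).card : ℝ) = n * P a) ∧
      (1 / n) * ∑ i, d (v i) (shat i) ≤ D) with hBf
  have hset : {v : Fin n → S |
      (∀ a, ((Finset.univ.filter (fun i => v i = a)).card : ℝ) = n * P a) ∧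
      (1 / n) * ∑ i, d (v i) (shat i) ≤ D} = ↑Bf := by
    ext v; simp [hBf]
  rw [hset, Set.ncard_coe_finset]
  set F : (Fin n → S) → (S × T → ℕ) := fun v p =>
    (univ.filter fun i => v i = p.1 ∧ shat i = p.2).card with hF
  have hcardsum : Bf.card = ∑ N ∈ Bf.image F, (Bf.filter fun v => F v = N).card :=
    Finset.card_eq_sum_card_fiberwise fun v hv => Finset.mem_image_of_mem F hv
  -- per-fiber bound
  have hfiber : ∀ N ∈ Bf.image F,
      ((Bf.filter fun v => F v = N).card : ℝ)
        ≤ Real.exp (n * (shEntropy P - RDF P d D)) := by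
    intro N hN
    obtain ⟨v0, hv0B, hv0N⟩ := Finset.mem_image.mp hN
    rw [hBf, Finset.mem_filter] at hv0B
    have hv0 : ∀ p : S × T, ((univ.filter fun i => v0 i = p.1 ∧ shat i = p.2).card) = N p :=
      fun p => by rw [← hv0N]
    -- marginal property
    have hmarg : ∀ s, ((∑ t, N (s, t) : ℕ) : ℝ) = n * P s := by
      intro s
      have h1 : (univ.filter fun i => v0 i = s).card = ∑ t, N (s, t) := by
        rw [Finset.card_eq_sum_card_fiberwise
          (f := shat) (s := univ.filter fun i => v0 i = s) (t := univ)
          (fun x _ => Finset.mem_univ _)]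
        apply Finset.sum_congr rfl
        intro t _
        rw [← hv0 (s, t)]
        congr 1
        ext i
        simp [and_comm]
      rw [← h1]
      exact hv0B.2.1 s
    -- distortion property
    have hdsum : ∑ i, d (v0 i) (shat i) = ∑ p : S × T, (N p : ℝ) * d p.1 p.2 := by
      rw [← Finset.sum_fiberwise_of_maps_to (g := fun i => (v0 i, shat i))
        (t := univ) (fun i _ => Finset.mem_univ _) (f := fun i => d (v0 i) (shat i))]
      apply Finset.sum_congr rfl
      intro p _
      have hfilt : (univ.filter fun i => (v0 i, shat i) = p)
          = (univ.filter fun i => v0 i = p.1 ∧ shat i = p.2) := by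
        ext i; simp [Prod.ext_iff]
      calc ∑ i ∈ univ.filter fun i => (v0 i, shat i) = p, d (v0 i) (shat i)
          = ∑ _i ∈ univ.filter fun i => (v0 i, shat i) = p, d p.1 p.2 := by
            apply Finset.sum_congr rfl
            intro i hi
            rw [Finset.mem_filter] at hi
            rw [← hi.2]
        _ = (N p : ℝ) * d p.1 p.2 := by
            rw [Finset.sum_const, hfilt, hv0 p, nsmul_eq_mul]
    have hdist : (1 / n) * ∑ p : S × T, (N p : ℝ) * d p.1 p.2 ≤ D := by
      rw [← hdsum]; exact hv0B.2.2
    have hsub : (Bf.filter fun v => F v = N)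
        ⊆ univ.filter fun v : Fin n → S =>
          ∀ p : S × T, ((univ.filter fun i => v i = p.1 ∧ shat i = p.2).card) = N p := by
      intro v hv
      rw [Finset.mem_filter] at hv
      rw [Finset.mem_filter]
      exact ⟨Finset.mem_univ _, fun p => by rw [← hv.2]⟩
    calc ((Bf.filter fun v => F v = N).card : ℝ)
        ≤ ((univ.filter fun v : Fin n → S =>
            ∀ p : S × T, ((univ.filter fun i => v i = p.1 ∧ shat i = p.2).card) = N p).card : ℝ) := by
          exact_mod_cast Finset.card_le_card hsub
      _ ≤ Real.exp (∑ p : S × T, (N p : ℝ) * Real.log ((∑ s, N (s, p.2) : ℕ) / (N p : ℝ))) :=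
          fiber_card_le n hn shat N v0 hv0
      _ ≤ Real.exp (n * (shEntropy P - RDF P d D)) := by
          apply Real.exp_le_exp.mpr
          exact exponent_bound n hn P hP1 hP0 d D (shat ⟨0, hn⟩) N hmarg hdist
  -- image cardinality bound
  have himg : ((Bf.image F).card : ℝ) ≤ ((n : ℝ) + 1) ^ (Fintype.card S * Fintype.card T) := by
    have hle : (Bf.image F).card ≤ (n + 1) ^ (Fintype.card S * Fintype.card T) := by
      have hinj : ∀ N ∈ Bf.image F, ∀ p, N p ≤ n := by
        intro N hN p
        obtain ⟨v0, _, hv0N⟩ := Finset.mem_image.mp hN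
        rw [← hv0N]
        calc F v0 p ≤ (univ : Finset (Fin n)).card := Finset.card_le_card (Finset.filter_subset _ _)
          _ = n := by simp
      have := Finset.card_le_card_of_injOn
        (f := fun (N : S × T → ℕ) (p : S × T) => (⟨min (N p) n, by omega⟩ : Fin (n + 1)))
        (fun N _ => Finset.mem_univ _)
        (by
          intro N hN N' hN' h
          funext p
          have h1 := congrFun h p
          have h2 : min (N p) n = min (N' p) n := by
            simpa using congrArg Fin.val h1
          rw [min_eq_left (hinj N hN p), min_eq_left (hinj N' hN' p)] at h2
          exact h2)
      calc (Bf.image F).card ≤ (univ : Finset (S × T → Fin (n + 1))).card := this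
        _ = (n + 1) ^ (Fintype.card S * Fintype.card T) := by
          rw [Finset.card_univ, Fintype.card_fun]
          simp [Fintype.card_prod]
    calc ((Bf.image F).card : ℝ) ≤ (((n + 1) ^ (Fintype.card S * Fintype.card T) : ℕ) : ℝ) := by
          exact_mod_cast hle
      _ = ((n : ℝ) + 1) ^ (Fintype.card S * Fintype.card T) := by push_cast; ring
  calc (Bf.card : ℝ) = ∑ N ∈ Bf.image F, ((Bf.filter fun v => F v = N).card : ℝ) := by
        rw [hcardsum]; push_cast; rfl
    _ ≤ ∑ _N ∈ Bf.image F, Real.exp (n * (shEntropy P - RDF P d D)) :=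
        Finset.sum_le_sum hfiber
    _ = ((Bf.image F).card : ℝ) * Real.exp (n * (shEntropy P - RDF P d D)) := by
        rw [Finset.sum_const, nsmul_eq_mul]
    _ ≤ ((n : ℝ) + 1) ^ (Fintype.card S * Fintype.card T)
          * Real.exp (n * (shEntropy P - RDF P d D)) :=
        mul_le_mul_of_nonneg_right himg (Real.exp_nonneg _)
end

section
/- Let ε ∈ (0,1) and λ = 1. Consider the optimization min over pairs (ε_s, ε_c) ∈ (0,1)² with ε_s + ε_c − ε_s·ε_c ≤ ε of Q⁻¹(ε_s) + Q⁻¹(ε_c), where Q⁻¹ is the inverse of the Gaussian tail function Q(x) = ∫ₓ^∞ (1/√(2π))e^{−t²/2}dt. The minimum is attained at ε_s = ε_c = 1 − √(1−ε), giving optimal value 2·Q⁻¹(1 − √(1−ε)). -/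
/-- The Gaussian tail function `Q(x) = ∫ₓ^∞ (1/√(2π)) e^{−t²/2} dt`. -/
noncomputable def gaussQ (x : ℝ) : ℝ :=
  ∫ t in Set.Ioi x, Real.exp (-t ^ 2 / 2) / Real.sqrt (2 * Real.pi)

open MeasureTheory Real Set Filter

noncomputable def phi (x : ℝ) : ℝ := Real.exp (-x ^ 2 / 2) / Real.sqrt (2 * Real.pi)

noncomputable def Phi (x : ℝ) : ℝ := ∫ t in Set.Iic x, phi t

lemma phi_eq (x : ℝ) : phi x = Real.exp (-(1/2) * x ^ 2) / Real.sqrt (2 * Real.pi) := by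
  unfold phi
  rw [show -x ^ 2 / 2 = -(1/2) * x ^ 2 by ring]

lemma phi_pos (x : ℝ) : 0 < phi x :=
  div_pos (Real.exp_pos _) (Real.sqrt_pos.2 (by positivity))

lemma phi_cont : Continuous phi := by
  unfold phi; fun_prop

lemma phi_integrable : Integrable phi := by
  have h := integrable_exp_neg_mul_sq (b := 1/2) (by norm_num)
  have heq : phi = fun x => Real.exp (-(1/2) * x ^ 2) / Real.sqrt (2 * Real.pi) :=
    funext phi_eq
  rw [heq]
  exact h.div_const _

lemma phi_even (x : ℝ) : phi (-x) = phi x := by unfold phi; rw [show (-x)^2 = x^2 by ring]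

lemma integral_phi : ∫ x, phi x = 1 := by
  simp only [phi_eq]
  rw [integral_div, integral_gaussian]
  rw [div_eq_one_iff_eq (by positivity)]
  rw [show (2:ℝ) * Real.pi = Real.pi / (1/2) by ring]

lemma phi_hasDeriv (x : ℝ) : HasDerivAt phi (-x * phi x) x := by
  have h : HasDerivAt (fun x : ℝ => Real.exp (-x ^ 2 / 2)) (-x * Real.exp (-x^2/2)) x := by
    have h1 : HasDerivAt (fun x : ℝ => -x ^ 2 / 2) (-x) x := by
      have := ((hasDerivAt_pow 2 x).neg).div_const 2
      simpa using this.congr_deriv (by ring)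
    have := (Real.hasDerivAt_exp _).comp x h1
    convert this using 1 <;> first | rfl | ring
  have := h.div_const (Real.sqrt (2 * Real.pi))
  unfold phi
  convert this using 1 <;> first | rfl | ring

lemma gaussQ_eq (x : ℝ) : gaussQ x = 1 - Phi x := by
  unfold gaussQ Phi
  have := intervalIntegral.integral_Iic_add_Ioi (b := x) phi_integrable.integrableOn phi_integrable.integrableOn
  rw [integral_phi] at this
  unfold phi at this ⊢
  linarith

lemma Phi_strictMono : StrictMono Phi := by
  intro a b hab
  have h1 : Phi b - Phi a = ∫ x in a..b, phi x :=
    intervalIntegral.integral_Iic_sub_Iic phi_integrable.integrableOn phi_integrable.integrableOn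
  have h2 : 0 < ∫ x in a..b, phi x :=
    intervalIntegral.intervalIntegral_pos_of_pos (phi_cont.intervalIntegrable a b) (fun x => phi_pos x) hab
  linarith

lemma Phi_pos (x : ℝ) : 0 < Phi x := by
  have h1 : (0:ℝ) ≤ Phi (x - 1) := integral_nonneg fun t => (phi_pos t).le
  have := Phi_strictMono (show x - 1 < x by linarith)
  linarith

lemma Phi_hasDeriv (x : ℝ) : HasDerivAt Phi (phi x) x := by
  have key : ∀ y, Phi y = Phi 0 + ∫ t in (0:ℝ)..y, phi t := by
    intro y
    have := intervalIntegral.integral_Iic_sub_Iic (a := (0:ℝ)) (b := y)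
      phi_integrable.integrableOn phi_integrable.integrableOn
    unfold Phi; linarith
  have h : HasDerivAt (fun y => Phi 0 + ∫ t in (0:ℝ)..y, phi t) (phi x) x := by
    exact (intervalIntegral.integral_hasDerivAt_right (phi_cont.intervalIntegrable 0 x)
      (phi_cont.stronglyMeasurableAtFilter _ _) phi_cont.continuousAt).const_add _
  exact h.congr_deriv rfl |>.congr_of_eventuallyEq (by filter_upwards with y; rw [key y])

-- Mills ratio bound
lemma mills (t : ℝ) (ht : 0 < t) : t * gaussQ t ≤ phi t := by
  have hint : IntegrableOn (fun s => s * phi s) (Set.Ioi t) := by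
    have := integrable_mul_exp_neg_mul_sq (b := 1/2) (by norm_num)
    have : Integrable (fun s : ℝ => s * phi s) := by
      simp only [phi_eq, ← mul_div_assoc]
      exact this.div_const _
    exact this.integrableOn
  have hkey : ∫ s in Set.Ioi t, s * phi s = phi t := by
    have hderiv : ∀ x ∈ Set.Ioi t, HasDerivAt (fun s => -phi s) (x * phi x) x := by
      intro x _
      exact (phi_hasDeriv x).neg.congr_deriv (by ring)
    have htend : Tendsto (fun s => -phi s) atTop (nhds 0) := by
      rw [← neg_zero]
      apply Tendsto.neg
      have : Tendsto (fun s : ℝ => -s ^ 2 / 2) atTop atBot := by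
        have h2 : Tendsto (fun s : ℝ => -(s ^ 2)) atTop atBot :=
          tendsto_neg_atTop_atBot.comp (tendsto_pow_atTop two_ne_zero)
        simpa [neg_div] using h2.atBot_div_const (by norm_num : (0:ℝ) < 2)
      have h3 := (Real.tendsto_exp_atBot.comp this).div_const (Real.sqrt (2 * Real.pi))
      rw [zero_div] at h3
      exact h3
    have := integral_Ioi_of_hasDerivAt_of_tendsto
      ((phi_cont.neg).continuousWithinAt) hderiv hint htend
    simpa using this
  have hmono : gaussQ t ≤ (1 / t) * ∫ s in Set.Ioi t, s * phi s := by
    rw [← integral_const_mul]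
    unfold gaussQ
    have : ∀ s ∈ Set.Ioi t, Real.exp (-s ^ 2 / 2) / Real.sqrt (2 * Real.pi) ≤ 1 / t * (s * phi s) := by
      intro s hs
      have hs' : t ≤ s := le_of_lt hs
      have : phi s ≤ 1 / t * (s * phi s) := by
        rw [one_div, inv_mul_eq_div, le_div_iff₀ ht]
        nlinarith [phi_pos s]
      simpa [phi] using this
    apply setIntegral_mono_on phi_integrable.integrableOn (hint.const_mul _) measurableSet_Ioi this
  rw [hkey] at hmono
  calc t * gaussQ t ≤ t * ((1/t) * phi t) := by
        apply mul_le_mul_of_nonneg_left hmono ht.le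
    _ = phi t := by field_simp

lemma mills' (x : ℝ) : 0 ≤ phi x + x * Phi x := by
  rcases le_or_gt 0 x with hx | hx
  · have := phi_pos x; have := Phi_pos x; nlinarith
  · set t := -x with ht
    have ht0 : 0 < t := by simp [ht]; linarith
    have hPhi : Phi x = gaussQ t := by
      unfold Phi gaussQ
      have h1 : ∫ s in Set.Iic x, phi s = ∫ s in Set.Iic x, phi (-s) := by
        apply setIntegral_congr_fun measurableSet_Iic
        intro s _; exact (phi_even s).symm
      rw [h1, integral_comp_neg_Iic]
      rfl
    have hphit : phi t = phi x := by rw [ht, phi_even]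
    have := mills t ht0
    rw [hPhi, ← hphit]
    have heq : phi t + x * gaussQ t = phi t - t * gaussQ t := by rw [ht]; ring
    linarith
  
-- g = Phi / phi is monotone
lemma g_hasDeriv (x : ℝ) :
    HasDerivAt (fun x => Phi x / phi x) ((phi x + x * Phi x) / phi x) x := by
  have h := (Phi_hasDeriv x).div (phi_hasDeriv x) (phi_pos x).ne'
  convert h using 1 <;> try rfl
  have hφ : phi x ≠ 0 := (phi_pos x).ne'
  field_simp
  ring

lemma g_mono : Monotone (fun x => Phi x / phi x) := by
  apply monotone_of_deriv_nonneg
  · intro x; exact (g_hasDeriv x).differentiableAt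
  · intro x
    rw [(g_hasDeriv x).deriv]
    exact div_nonneg (mills' x) (phi_pos x).le

lemma cross (u v : ℝ) (huv : u ≤ v) : Phi u * phi v ≤ phi u * Phi v := by
  have := g_mono huv
  rw [div_le_div_iff₀ (phi_pos u) (phi_pos v)] at this
  linarith

-- midpoint log-concavity
lemma Phi_midpoint (m s : ℝ) : Phi (m - s) * Phi (m + s) ≤ Phi m ^ 2 := by
  -- reduce to s ≥ 0
  wlog hs : 0 ≤ s generalizing s
  · have := this (-s) (by linarith [not_le.1 hs])
    rw [sub_neg_eq_add, ← sub_eq_add_neg, mul_comm] at this; exact this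
  set F : ℝ → ℝ := fun s => Phi (m - s) * Phi (m + s) with hF
  have hFd : ∀ s : ℝ, HasDerivAt F (-phi (m - s) * Phi (m + s) + Phi (m - s) * phi (m + s)) s := by
    intro s
    have h1 : HasDerivAt (fun s : ℝ => Phi (m - s)) (-phi (m - s)) s := by
      have := (Phi_hasDeriv (m - s)).comp s (((hasDerivAt_id s).const_sub m))
      exact this.congr_deriv (by ring)
    have h2 : HasDerivAt (fun s : ℝ => Phi (m + s)) (phi (m + s)) s := by
      have := (Phi_hasDeriv (m + s)).comp s ((hasDerivAt_id s).const_add m)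
      exact this.congr_deriv (by ring)
    exact h1.mul h2
  have hanti : AntitoneOn F (Set.Ici 0) := by
    apply antitoneOn_of_deriv_nonpos (convex_Ici 0)
    · exact fun x _ => (hFd x).differentiableAt.continuousAt.continuousWithinAt
    · exact fun x _ => (hFd x).differentiableAt.differentiableWithinAt
    · intro x hx
      rw [interior_Ici] at hx
      rw [(hFd x).deriv]
      have := cross (m - x) (m + x) (by linarith [le_of_lt (Set.mem_Ioi.mp hx)])
      nlinarith
  have := hanti (Set.self_mem_Ici) hs hs
  simp only [hF] at this ⊢
  calc Phi (m - s) * Phi (m + s) ≤ Phi (m - 0) * Phi (m + 0) := this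
    _ = Phi m ^ 2 := by ring_nf

/-- For `ε ∈ (0,1)` and `λ = 1`, the minimum of `Q⁻¹(ε_s) + Q⁻¹(ε_c)` over pairs
`(ε_s, ε_c) ∈ (0,1)²` with `ε_s + ε_c − ε_s ε_c ≤ ε` is attained at
`ε_s = ε_c = 1 − √(1−ε)`, with optimal value `2 Q⁻¹(1 − √(1−ε))`. -/
theorem separation_symmetric_optimum (ε : ℝ) (hε : ε ∈ Set.Ioo (0 : ℝ) 1)
    (Qinv : ℝ → ℝ) (hQinv : ∀ y ∈ Set.Ioo (0 : ℝ) 1, gaussQ (Qinv y) = y) :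
    IsLeast {v : ℝ | ∃ εs εc : ℝ, εs ∈ Set.Ioo (0 : ℝ) 1 ∧ εc ∈ Set.Ioo (0 : ℝ) 1 ∧
        εs + εc - εs * εc ≤ ε ∧ v = Qinv εs + Qinv εc}
      (2 * Qinv (1 - Real.sqrt (1 - ε))) := by
  obtain ⟨hε0, hε1⟩ := hε
  have h1ε : (0:ℝ) < 1 - ε := by linarith
  have hs0 : 0 < Real.sqrt (1 - ε) := Real.sqrt_pos.2 h1ε
  have hs1 : Real.sqrt (1 - ε) < 1 := by
    have : Real.sqrt (1 - ε) < Real.sqrt 1 := Real.sqrt_lt_sqrt h1ε.le (by linarith)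
    simpa using this
  have hsq : Real.sqrt (1 - ε) ^ 2 = 1 - ε := Real.sq_sqrt h1ε.le
  set a : ℝ := 1 - Real.sqrt (1 - ε) with ha
  have haI : a ∈ Set.Ioo (0:ℝ) 1 := ⟨by simp [ha]; linarith, by simp [ha]; linarith⟩
  constructor
  · exact ⟨a, a, haI, haI, by nlinarith, by ring⟩
  · rintro v ⟨εs, εc, hεs, hεc, hcon, rfl⟩
    set m := Qinv a with hm'
    have hQm : gaussQ m = a := hQinv a haI
    have hQs : gaussQ (Qinv εs) = εs := hQinv εs hεs
    have hQc : gaussQ (Qinv εc) = εc := hQinv εc hεc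
    have hm : Phi m = Real.sqrt (1 - ε) := by
      have := gaussQ_eq m; rw [hQm] at this; simp [ha] at this; linarith
    have hPs : Phi (Qinv εs) = 1 - εs := by
      have := gaussQ_eq (Qinv εs); rw [hQs] at this; linarith
    have hPc : Phi (Qinv εc) = 1 - εc := by
      have := gaussQ_eq (Qinv εc); rw [hQc] at this; linarith
    by_contra hlt
    push_neg at hlt
    set s := m - Qinv εs with hs
    have hxc : Qinv εc < m + s := by
      have : Qinv εs + Qinv εc < 2 * m := hlt
      simp only [hs]; linarith
    have h2 : Phi (Qinv εc) < Phi (m + s) := Phi_strictMono hxc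
    have h3 : Phi (m - s) = 1 - εs := by
      rw [show m - s = Qinv εs by simp [hs]]; exact hPs
    have key := Phi_midpoint m s
    have hfinal : (1 - εs) * (1 - εc) < 1 - ε := by
      calc (1 - εs) * (1 - εc) = Phi (m - s) * Phi (Qinv εc) := by rw [h3, hPc]
        _ < Phi (m - s) * Phi (m + s) :=
            mul_lt_mul_of_pos_left h2 (Phi_pos _)
        _ ≤ Phi m ^ 2 := key
        _ = 1 - ε := by rw [hm, hsq]
    nlinarith
end
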